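/- With the above notation, r_A·(√(l²+1) − √(m̄²+1) + √(n̄²+1) − l + m̄ + n̄ − 1)/(2m̄) = r_C·sinh²(σ_A − β_A). -/

import Mathlib

open Real

private lemma sq_eq_of_pos {u v : ℝ} (hu : 0 < u) (hv : 0 < v) (h : u ^ 2 = v ^ 2) : u = v := by
  nlinarith

private lemma key_alg (S X Y Z P Q R : ℝ) (hX : X ≠ 0) (hY : Y ≠ 0) (hZ : Z ≠ 0) (hS : S ≠ 0)
    (hrel : S ^ 2 = X ^ 2 + Y ^ 2 + Z ^ 2) :
    (S*Y*Z/X) * (P*R/(Y*Z) - P*Q/(S*Y) + Q*R/(S*Z) - S*X/(Y*Z) + X*Z/(S*Y) + X*Y/(S*Z) - 1) / (2*(X*Z/(S*Y)))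
    = (S*X*Y/Z) * (((S*P*R + Q*Y*R - Q*P*Z - S*Y*Z)/X^3 - 1)/2) := by
  field_simp
  linear_combination (-X) * hrel

theorem malfatti_radius_a1_C
    (a b c : ℝ) (ha : 0 < a) (hb : 0 < b) (hc : 0 < c)
    (habc : a < b + c) (hbca : b < c + a) (hcab : c < a + b)
    (s r rA rC αA βA γA σA l mb nb : ℝ)
    (hs : s = (a + b + c) / 2)
    (hr : r = Real.sqrt ((s - a) * (s - b) * (s - c) / s))
    (hrA : rA = Real.sqrt (s * (s - b) * (s - c) / (s - a)))
    (hrC : rC = Real.sqrt (s * (s - a) * (s - b) / (s - c)))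
    (hαA : 0 < αA) (hβA : 0 < βA) (hγA : 0 < γA)
    (hsinhα : Real.sinh αA ^ 2 = a / (s - a))
    (hsinhβ : Real.sinh βA ^ 2 = (s - c) / (s - a))
    (hsinhγ : Real.sinh γA ^ 2 = (s - b) / (s - a))
    (hσA : σA = (αA + βA + γA) / 2)
    (hl : l = s / rA) (hm : mb = (s - c) / rA) (hn : nb = (s - b) / rA) :
    rA * (Real.sqrt (l ^ 2 + 1) - Real.sqrt (mb ^ 2 + 1) + Real.sqrt (nb ^ 2 + 1) - l + mb + nb - 1) / (2 * mb) = rC * Real.sinh (σA - βA) ^ 2 := by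
  have hspos : 0 < s := by rw [hs]; linarith
  have hx : 0 < s - a := by rw [hs]; linarith
  have hy : 0 < s - b := by rw [hs]; linarith
  have hz : 0 < s - c := by rw [hs]; linarith
  set S := Real.sqrt s with hSdef
  set X := Real.sqrt (s - a) with hXdef
  set Y := Real.sqrt (s - b) with hYdef
  set Z := Real.sqrt (s - c) with hZdef
  set P := Real.sqrt c with hPdef
  set Q := Real.sqrt a with hQdef
  set R := Real.sqrt b with hRdef
  have hSpos : 0 < S := Real.sqrt_pos.mpr hspos
  have hXpos : 0 < X := Real.sqrt_pos.mpr hx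
  have hYpos : 0 < Y := Real.sqrt_pos.mpr hy
  have hZpos : 0 < Z := Real.sqrt_pos.mpr hz
  have hPpos : 0 < P := Real.sqrt_pos.mpr hc
  have hQpos : 0 < Q := Real.sqrt_pos.mpr ha
  have hRpos : 0 < R := Real.sqrt_pos.mpr hb
  have hS2 : S ^ 2 = s := Real.sq_sqrt hspos.le
  have hX2 : X ^ 2 = s - a := Real.sq_sqrt hx.le
  have hY2 : Y ^ 2 = s - b := Real.sq_sqrt hy.le
  have hZ2 : Z ^ 2 = s - c := Real.sq_sqrt hz.le
  have hP2 : P ^ 2 = c := Real.sq_sqrt hc.le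
  have hQ2 : Q ^ 2 = a := Real.sq_sqrt ha.le
  have hR2 : R ^ 2 = b := Real.sq_sqrt hb.le
  -- rA and rC in surds
  have hrA' : rA = S * Y * Z / X := by
    rw [hrA]
    have e : s * (s - b) * (s - c) / (s - a) = (S * Y * Z / X) ^ 2 := by
      rw [div_pow, mul_pow, mul_pow, hS2, hX2, hY2, hZ2]
    rw [e, Real.sqrt_sq (by positivity)]
  have hrC' : rC = S * X * Y / Z := by
    rw [hrC]
    have e : s * (s - a) * (s - b) / (s - c) = (S * X * Y / Z) ^ 2 := by
      rw [div_pow, mul_pow, mul_pow, hS2, hX2, hY2, hZ2]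
    rw [e, Real.sqrt_sq (by positivity)]
  have hrApos : 0 < rA := by rw [hrA']; positivity
  -- l, mb, nb in surds
  have hl' : l = S * X / (Y * Z) := by
    rw [hl, hrA']
    rw [eq_div_iff (by positivity)]
    field_simp
    linear_combination (-1) * hS2
  have hm' : mb = X * Z / (S * Y) := by
    rw [hm, hrA']
    rw [eq_div_iff (by positivity)]
    field_simp
    linear_combination (-1) * hZ2
  have hn' : nb = X * Y / (S * Z) := by
    rw [hn, hrA']
    rw [eq_div_iff (by positivity)]
    field_simp
    linear_combination (-1) * hY2
  -- sqrt terms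
  have hsq1 : Real.sqrt (l ^ 2 + 1) = P * R / (Y * Z) := by
    have e : l ^ 2 + 1 = (P * R / (Y * Z)) ^ 2 := by
      have hD : (s - b) * (s - c) ≠ 0 := (mul_pos hy hz).ne'
      rw [hl', div_pow, div_pow, mul_pow, mul_pow, mul_pow, hS2, hX2, hY2, hZ2, hP2, hR2]
      rw [div_add' _ _ _ hD, div_eq_div_iff hD hD, hs]
      ring
    rw [e, Real.sqrt_sq (by positivity)]
  have hsq2 : Real.sqrt (mb ^ 2 + 1) = P * Q / (S * Y) := by
    have e : mb ^ 2 + 1 = (P * Q / (S * Y)) ^ 2 := by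
      have hD : s * (s - b) ≠ 0 := (mul_pos hspos hy).ne'
      rw [hm', div_pow, div_pow, mul_pow, mul_pow, mul_pow, hS2, hX2, hY2, hZ2, hP2, hQ2]
      rw [div_add' _ _ _ hD, div_eq_div_iff hD hD, hs]
      ring
    rw [e, Real.sqrt_sq (by positivity)]
  have hsq3 : Real.sqrt (nb ^ 2 + 1) = Q * R / (S * Z) := by
    have e : nb ^ 2 + 1 = (Q * R / (S * Z)) ^ 2 := by
      have hD : s * (s - c) ≠ 0 := (mul_pos hspos hz).ne'
      rw [hn', div_pow, div_pow, mul_pow, mul_pow, mul_pow, hS2, hX2, hY2, hZ2, hQ2, hR2]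
      rw [div_add' _ _ _ hD, div_eq_div_iff hD hD, hs]
      ring
    rw [e, Real.sqrt_sq (by positivity)]
  -- hyperbolic values
  have hcoshα : Real.cosh αA = S / X := by
    refine sq_eq_of_pos (Real.cosh_pos αA) (by positivity) ?_
    rw [Real.cosh_sq, hsinhα, div_pow, hS2, hX2, div_add' _ _ _ (ne_of_gt hx)]
    ring_nf
  have hsinhα' : Real.sinh αA = Q / X := by
    refine sq_eq_of_pos (Real.sinh_pos_iff.mpr hαA) (by positivity) ?_
    rw [hsinhα, div_pow, hQ2, hX2]
  have hcoshβ : Real.cosh βA = R / X := by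
    refine sq_eq_of_pos (Real.cosh_pos βA) (by positivity) ?_
    rw [Real.cosh_sq, hsinhβ, div_pow, hR2, hX2, div_add' _ _ _ (ne_of_gt hx),
      div_eq_div_iff (ne_of_gt hx) (ne_of_gt hx), hs]
    ring
  have hsinhβ' : Real.sinh βA = Z / X := by
    refine sq_eq_of_pos (Real.sinh_pos_iff.mpr hβA) (by positivity) ?_
    rw [hsinhβ, div_pow, hZ2, hX2]
  have hcoshγ : Real.cosh γA = P / X := by
    refine sq_eq_of_pos (Real.cosh_pos γA) (by positivity) ?_
    rw [Real.cosh_sq, hsinhγ, div_pow, hP2, hX2, div_add' _ _ _ (ne_of_gt hx),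
      div_eq_div_iff (ne_of_gt hx) (ne_of_gt hx), hs]
    ring
  have hsinhγ' : Real.sinh γA = Y / X := by
    refine sq_eq_of_pos (Real.sinh_pos_iff.mpr hγA) (by positivity) ?_
    rw [hsinhγ, div_pow, hY2, hX2]
  -- sinh(σA - βA)^2
  have h2 : αA + γA - βA = 2 * (σA - βA) := by rw [hσA]; ring
  have h3 : Real.cosh (αA + γA - βA) = 2 * Real.sinh (σA - βA) ^ 2 + 1 := by
    rw [h2, Real.cosh_two_mul, Real.cosh_sq]; ring
  have h4 : Real.cosh (αA + γA - βA) = (S*P*R + Q*Y*R - Q*P*Z - S*Y*Z) / X ^ 3 := by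
    rw [Real.cosh_sub, Real.cosh_add, Real.sinh_add, hcoshα, hsinhα', hcoshβ, hsinhβ',
      hcoshγ, hsinhγ']
    field_simp
    ring
  have h5 : Real.sinh (σA - βA) ^ 2 = ((S*P*R + Q*Y*R - Q*P*Z - S*Y*Z) / X ^ 3 - 1) / 2 := by
    rw [← h4, h3]; ring
  -- finish
  have hrel : S ^ 2 = X ^ 2 + Y ^ 2 + Z ^ 2 := by
    rw [hS2, hX2, hY2, hZ2, hs]; ring
  rw [hsq1, hsq2, hsq3, hl', hm', hn', hrA', hrC', h5]
  exact key_alg S X Y Z P Q R (ne_of_gt hXpos) (ne_of_gt hYpos) (ne_of_gt hZpos)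
    (ne_of_gt hSpos) hrel
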